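/- Let m ≥ 1, γ a primitive m-th root of unity in k, φ_i(x) = 1 - γ^{-i-1} x^d, and let 1 ≤ i ≤ m-1. Then ∑_{j=0}^{m-1} γ^{-j} · φ_j φ_{j+1} ⋯ φ_{j+m-2-i} = 0, where the product runs over m-1-i consecutive factors with indices mod m (i.e. omitting the i+1 consecutive factors φ_{j-1-i}, …, φ_{j-1} from φ_0 ⋯ φ_{m-1}). -/

import Mathlib

open Polynomial Finset

theorem stmt_5 {k : Type*} [Field k] [IsAlgClosed k] [CharZero k]
    (m d : ℕ) (hm : 1 ≤ m) (hd : 1 ≤ d) (γ : k) (hγ : IsPrimitiveRoot γ m)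
    (i : ℕ) (hi1 : 1 ≤ i) (hi2 : i ≤ m - 1) :
    ∑ j ∈ Finset.range m, Polynomial.C (γ ^ (-(j : ℤ))) *
      ∏ r ∈ Finset.range (m - 1 - i),
        ((1 : Polynomial k) - Polynomial.C (γ ^ (-((j : ℤ) + (r : ℤ)) - 1)) * Polynomial.X ^ d)
      = 0 := by
  have hm2 : 2 ≤ m := by omega
  have hγ0 : γ ≠ 0 := hγ.ne_zero (by omega)
  set n := m - 1 - i with hn
  have hnm : n + 1 < m := by omega
  set Q : Polynomial k := ∏ r ∈ range n, (1 - C (γ ^ (-(r:ℤ) - 1)) * X) with hQ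
  have hQdeg : Q.natDegree < n + 1 := by
    have h1 : Q.natDegree ≤ ∑ r ∈ range n, (1 - C (γ ^ (-(r:ℤ) - 1)) * X).natDegree :=
      Polynomial.natDegree_prod_le _ _
    have h2 : ∀ r ∈ range n, (1 - C (γ ^ (-(r:ℤ) - 1)) * X).natDegree ≤ 1 := by
      intro r _
      refine le_trans (natDegree_sub_le _ _) ?_
      simp only [natDegree_one, max_le_iff]
      exact ⟨by omega, le_trans (natDegree_C_mul_le _ _) natDegree_X_le⟩
    have h3 : ∑ r ∈ range n, (1 - C (γ ^ (-(r:ℤ) - 1)) * X).natDegree ≤ n := by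
      calc _ ≤ ∑ _r ∈ range n, 1 := Finset.sum_le_sum h2
        _ = n := by simp
    omega
  -- rewrite each product via substitution into Q
  have key : ∀ j : ℕ,
      ∏ r ∈ range n, ((1:Polynomial k) - C (γ ^ (-((j:ℤ)+(r:ℤ)) - 1)) * X^d)
        = ∑ s ∈ range (n+1), C (Q.coeff s * γ ^ (-(j:ℤ) * s)) * X^(d*s) := by
    intro j
    have h1 : ∏ r ∈ range n, ((1:Polynomial k) - C (γ ^ (-((j:ℤ)+(r:ℤ)) - 1)) * X^d)
        = aeval (C (γ ^ (-(j:ℤ))) * X^d) Q := by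
      rw [hQ, map_prod]
      refine Finset.prod_congr rfl fun r _ => ?_
      simp only [map_sub, map_one, map_mul, aeval_C, aeval_X, aeval_X_pow, algebraMap_eq]
      rw [← mul_assoc, ← C_mul, ← zpow_add₀ hγ0]
      congr 2
      ring
    rw [h1]
    conv_lhs => rw [Q.as_sum_range' (n+1) hQdeg]
    rw [map_sum]
    refine Finset.sum_congr rfl fun s _ => ?_
    rw [aeval_monomial]
    simp only [algebraMap_eq]
    rw [mul_pow, ← C_pow, ← zpow_natCast (γ ^ (-(j:ℤ))) s, ← zpow_mul, ← pow_mul, ← mul_assoc, ← C_mul]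
  simp only [key, Finset.mul_sum]
  rw [Finset.sum_comm]
  refine Finset.sum_eq_zero fun s hs => ?_
  have hterm : ∀ j : ℕ, C (γ ^ (-(j:ℤ))) * (C (Q.coeff s * γ ^ (-(j:ℤ) * s)) * X^(d*s))
      = C (Q.coeff s) * X^(d*s) * C ((γ ^ (-(s:ℤ)-1))^j) := by
    intro j
    have he : ((γ:k) ^ (-(s:ℤ)-1))^j = γ ^ (-(j:ℤ)) * γ ^ (-(j:ℤ) * s) := by
      rw [← zpow_natCast (γ ^ (-(s:ℤ)-1)) j, ← zpow_mul, ← zpow_add₀ hγ0]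
      congr 1
      ring
    rw [he]
    simp only [C_mul]
    ring
  simp only [hterm]
  rw [← Finset.mul_sum, ← map_sum]
  have hx1 : (γ : k) ^ (-(s:ℤ)-1) ≠ 1 := by
    intro h
    rw [show -(s:ℤ)-1 = -((s:ℤ)+1) by ring, zpow_neg, inv_eq_one] at h
    rw [show (s:ℤ)+1 = ((s+1 : ℕ) : ℤ) by push_cast; ring, zpow_natCast] at h
    have := Nat.le_of_dvd (by omega) ((hγ.pow_eq_one_iff_dvd _).mp h)
    have hs' := Finset.mem_range.mp hs
    omega
  have hxm : ((γ:k) ^ (-(s:ℤ)-1))^m = 1 := by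
    rw [← zpow_natCast (γ ^ (-(s:ℤ)-1)) m, ← zpow_mul, mul_comm, zpow_mul, zpow_natCast,
      hγ.pow_eq_one, one_zpow]
  rw [geom_sum_eq hx1, hxm, sub_self, zero_div, map_zero, mul_zero]
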